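/- Let P ∈ M_k(E) be a projection of rank n with all diagonal entries equal to n/k, 0 < n < k, and let d = gcd(n,k), k' = k/d. If A ⊆ {1,...,k} is a subset such that P commutes with the diagonal projection Q_A onto the coordinates in A, then |A| is a multiple of k'. -/

import Mathlib

open Matrix

lemma trace_eq_rank_of_idem {𝕜 : Type*} [RCLike 𝕜] {k : ℕ}
    (M : Matrix (Fin k) (Fin k) 𝕜) (h : M * M = M) :
    M.trace = (M.rank : 𝕜) := by
  have hf : LinearMap.IsProj (LinearMap.range M.mulVecLin) M.mulVecLin := by
    constructor
    · intro x; exact LinearMap.mem_range_self _ x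
    · rintro x ⟨y, rfl⟩
      rw [← LinearMap.comp_apply, ← Matrix.mulVecLin_mul, h]
  have := hf.trace
  rw [Matrix.rank]
  rw [← this]
  rw [LinearMap.trace_eq_matrix_trace 𝕜 (Pi.basisFun 𝕜 (Fin k))]
  congr 1
  ext i j
  simp [LinearMap.toMatrix_apply, Matrix.mulVecLin_apply, Matrix.mulVec, dotProduct,
    Pi.basisFun_apply, Pi.single_apply]

theorem stmt14 {𝕜 : Type*} [RCLike 𝕜] {n k : ℕ} (hn : 0 < n) (hnk : n < k)
    (P : Matrix (Fin k) (Fin k) 𝕜)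
    (hsym : Pᴴ = P) (hidem : P * P = P) (hrank : P.rank = n)
    (hdiag : ∀ i, P i i = (n : 𝕜) / k)
    (A : Finset (Fin k))
    (hcomm : P * Matrix.diagonal (fun i => if i ∈ A then (1 : 𝕜) else 0) =
      Matrix.diagonal (fun i => if i ∈ A then (1 : 𝕜) else 0) * P) :
    (k / Nat.gcd n k) ∣ A.card := by
  set Q : Matrix (Fin k) (Fin k) 𝕜 :=
    Matrix.diagonal (fun i => if i ∈ A then (1 : 𝕜) else 0) with hQ
  have hQQ : Q * Q = Q := by
    rw [hQ, Matrix.diagonal_mul_diagonal]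
    apply congrArg Matrix.diagonal; funext i; by_cases h : i ∈ A <;> simp [h]
  have hMidem : (P * Q) * (P * Q) = P * Q := by
    calc (P * Q) * (P * Q) = P * (Q * P) * Q := by noncomm_ring
      _ = P * (P * Q) * Q := by rw [← hcomm]
      _ = (P * P) * (Q * Q) := by noncomm_ring
      _ = P * Q := by rw [hidem, hQQ]
  have htr := trace_eq_rank_of_idem (P * Q) hMidem
  have htr2 : (P * Q).trace = (A.card : 𝕜) * n / k := by
    rw [Matrix.trace]
    have : ∀ i, (P * Q).diag i = if i ∈ A then (n : 𝕜) / k else 0 := by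
      intro i
      simp only [Matrix.diag_apply, hQ, Matrix.mul_diagonal]
      by_cases h : i ∈ A <;> simp [h, hdiag i]
    simp_rw [this]
    rw [Finset.sum_ite_mem, Finset.univ_inter, Finset.sum_const, nsmul_eq_mul, mul_div_assoc]
  set r := (P * Q).rank with hr
  have hk0 : (k : 𝕜) ≠ 0 := by
    exact_mod_cast (hn.trans hnk).ne'
  have key : (A.card : 𝕜) * n = (r : 𝕜) * k := by
    have h3 : (A.card : 𝕜) * n / k = r := htr2.symm.trans htr
    rw [div_eq_iff hk0] at h3
    exact h3
  have keyN : A.card * n = r * k := by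
    exact_mod_cast key
  have hdvd : k ∣ A.card * n := ⟨r, by rw [keyN, Nat.mul_comm]⟩
  -- number theory
  set d := Nat.gcd n k with hd
  have hd0 : 0 < d := Nat.gcd_pos_of_pos_left _ hn
  have hdk : d ∣ k := Nat.gcd_dvd_right n k
  have hdn : d ∣ n := Nat.gcd_dvd_left n k
  have hcop : Nat.Coprime (k / d) (n / d) := (Nat.coprime_div_gcd_div_gcd hd0).symm
  have h1 : (k / d) ∣ A.card * (n / d) := by
    have h2 : d * (k / d) ∣ d * (A.card * (n / d)) := by
      rw [Nat.mul_div_cancel' hdk, mul_left_comm, Nat.mul_div_cancel' hdn]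
      exact hdvd
    exact (Nat.mul_dvd_mul_iff_left hd0).mp h2
  exact (Nat.Coprime.dvd_of_dvd_mul_right hcop h1)
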